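/- The unique real solution α of 4/2^α + 12/4^α + 60/8^α = 1 satisfies 2.79 < α < 2.80. -/

import Mathlib

open Real

lemma pow_eq (α : ℝ) : (4:ℝ)^α = ((2:ℝ)^α)^2 ∧ (8:ℝ)^α = ((2:ℝ)^α)^3 := by
  constructor
  · rw [← Real.rpow_natCast ((2:ℝ)^α) 2, ← Real.rpow_mul (by norm_num), mul_comm,
      Real.rpow_mul (by norm_num : (0:ℝ) ≤ 2), Real.rpow_natCast]
    norm_num
  · rw [← Real.rpow_natCast ((2:ℝ)^α) 3, ← Real.rpow_mul (by norm_num), mul_comm,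
      Real.rpow_mul (by norm_num : (0:ℝ) ≤ 2), Real.rpow_natCast]
    norm_num

lemma key (α : ℝ) : (4 / (2:ℝ) ^ α + 12 / (4:ℝ) ^ α + 60 / (8:ℝ) ^ α = 1) ↔
    ((2:ℝ)^α)^3 = 4*((2:ℝ)^α)^2 + 12*((2:ℝ)^α) + 60 := by
  obtain ⟨h4, h8⟩ := pow_eq α
  have ht : (0:ℝ) < (2:ℝ)^α := Real.rpow_pos_of_pos (by norm_num) α
  rw [h4, h8]
  set t := (2:ℝ)^α
  rw [div_add_div _ _ (by positivity) (by positivity), div_add_div _ _ (by positivity) (by positivity),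
    div_eq_one_iff_eq (by positivity)]
  have h3 : (0:ℝ) < t^3 := by positivity
  constructor <;> intro h
  · have h' : (4*t^2+12*t+60) * t^3 = t^3 * t^3 := by ring_nf; ring_nf at h; linarith
    have := mul_right_cancel₀ h3.ne' h'
    linarith
  · linear_combination (-(t^3))*h

lemma cubic_bounds {t : ℝ} (ht : 0 < t) (h : t^3 = 4*t^2 + 12*t + 60) :
    6.92 < t ∧ t < 6.962 := by
  have h4 : 4 < t := by nlinarith [sq_nonneg t]
  constructor
  · nlinarith [sq_nonneg (t - 6.92), sq_nonneg (t-4)]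
  · nlinarith [sq_nonneg (t - 6.962), sq_nonneg (t-4)]

lemma exists_cubic_root : ∃ t : ℝ, t ∈ Set.Icc (6:ℝ) 7 ∧ t^3 = 4*t^2 + 12*t + 60 := by
  have hc : ContinuousOn (fun t : ℝ => t^3 - 4*t^2 - 12*t - 60) (Set.Icc 6 7) := by
    fun_prop
  have := intermediate_value_Icc (by norm_num : (6:ℝ) ≤ 7) hc
  have h0 : (0:ℝ) ∈ Set.Icc ((fun t : ℝ => t^3 - 4*t^2 - 12*t - 60) 6)
      ((fun t : ℝ => t^3 - 4*t^2 - 12*t - 60) 7) := by norm_num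
  obtain ⟨t, htI, ht⟩ := this h0
  exact ⟨t, htI, by simp at ht; nlinarith [ht]⟩

lemma root_unique {a b : ℝ} (ha4 : 4 < a) (hb4 : 4 < b)
    (ha : a^3 = 4*a^2 + 12*a + 60) (hb : b^3 = 4*b^2 + 12*b + 60) : a = b := by
  have hpos : (0:ℝ) < a^2 + a*b + b^2 - 4*a - 4*b - 12 := by nlinarith
  by_contra h
  rcases lt_or_gt_of_ne h with hlt | hlt
  · nlinarith [mul_pos (sub_pos.2 hlt) hpos]
  · nlinarith [mul_pos (sub_pos.2 hlt) hpos]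

theorem root_h_bounds :
    (∃! α : ℝ, 4 / (2:ℝ) ^ α + 12 / (4:ℝ) ^ α + 60 / (8:ℝ) ^ α = 1) ∧
    (∀ α : ℝ, 4 / (2:ℝ) ^ α + 12 / (4:ℝ) ^ α + 60 / (8:ℝ) ^ α = 1 →
      2.79 < α ∧ α < 2.80) := by
  have bnd : ∀ α : ℝ, 4 / (2:ℝ) ^ α + 12 / (4:ℝ) ^ α + 60 / (8:ℝ) ^ α = 1 →
      2.79 < α ∧ α < 2.80 := by
    intro α hα
    rw [key] at hα
    have ht : (0:ℝ) < (2:ℝ)^α := Real.rpow_pos_of_pos (by norm_num) α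
    obtain ⟨hl, hr⟩ := cubic_bounds ht hα
    constructor
    · -- 2.79 < α  ⇔  2^2.79 < 2^α
      rw [← Real.rpow_lt_rpow_left_iff (x := (2:ℝ)) (by norm_num)]
      calc (2:ℝ)^(2.79:ℝ) < 6.92 := by
            by_contra hcon
            push_neg at hcon
            have h100 : (6.92:ℝ)^(100:ℕ) ≤ ((2:ℝ)^(2.79:ℝ))^(100:ℕ) :=
              pow_le_pow_left₀ (by norm_num) hcon 100
            rw [← Real.rpow_natCast ((2:ℝ)^(2.79:ℝ)) 100, ← Real.rpow_mul (by norm_num)] at h100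
            norm_num at h100
            rw [show (2:ℝ)^279 = ((2:ℝ)^93)^3 by rw [← pow_mul]] at h100
            norm_num at h100
        _ < 2^α := hl
    · rw [← Real.rpow_lt_rpow_left_iff (x := (2:ℝ)) (by norm_num)]
      calc (2:ℝ)^α < 6.962 := hr
        _ < (2:ℝ)^(2.80:ℝ) := by
            by_contra hcon
            push_neg at hcon
            have h5 : ((2:ℝ)^(2.80:ℝ))^(5:ℕ) ≤ (6.962:ℝ)^(5:ℕ) :=
              pow_le_pow_left₀ (by positivity) hcon 5
            rw [← Real.rpow_natCast ((2:ℝ)^(2.80:ℝ)) 5, ← Real.rpow_mul (by norm_num)] at h5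
            norm_num at h5
  refine ⟨?_, bnd⟩
  obtain ⟨t₀, ht₀I, ht₀⟩ := exists_cubic_root
  have ht₀pos : (0:ℝ) < t₀ := by linarith [ht₀I.1]
  refine ⟨Real.logb 2 t₀, ?_, ?_⟩
  · show 4 / (2:ℝ) ^ (Real.logb 2 t₀) + 12 / (4:ℝ) ^ (Real.logb 2 t₀) + 60 / (8:ℝ) ^ (Real.logb 2 t₀) = 1
    rw [key, Real.rpow_logb (by norm_num) (by norm_num) ht₀pos]
    exact ht₀
  · intro β hβ
    rw [key] at hβ
    have htβ : (0:ℝ) < (2:ℝ)^β := Real.rpow_pos_of_pos (by norm_num) β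
    have h4β : 4 < (2:ℝ)^β := by nlinarith [sq_nonneg ((2:ℝ)^β)]
    have h4t : 4 < t₀ := by nlinarith [sq_nonneg t₀]
    have heq : (2:ℝ)^β = t₀ := root_unique h4β h4t hβ ht₀
    rw [← heq, Real.logb_rpow (by norm_num)]
    norm_num
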